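/- Let H be a graph with at least one edge, let r ≥ 300·v(H)^9, let n ≥ r+1, and let G be an n-vertex K_{r+1}-free graph that maximizes inj(H,·) among all n-vertex K_{r+1}-free graphs. Then every vertex v of G satisfies deg(v) ≥ (1 − 1/(100·v(H)^6))·n; in particular G is (1/(100·v(H)^6))-dense. -/

import Mathlib

open SimpleGraph Finset

/-- The number of injective homomorphisms from `H` to `G`. -/
noncomputable def injCount {α β : Type*} (H : SimpleGraph α) (G : SimpleGraph β) : ℕ :=
  Nat.card {f : α → β // Function.Injective f ∧ ∀ ⦃a b⦄, H.Adj a b → G.Adj (f a) (f b)}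

attribute [local instance] Classical.propDecidable

namespace ExtremalDense

variable {α : Type*} [Fintype α] {n : ℕ}

def IsHom (H : SimpleGraph α) (G : SimpleGraph (Fin n)) (f : α → Fin n) : Prop :=
  Function.Injective f ∧ ∀ ⦃a b⦄, H.Adj a b → G.Adj (f a) (f b)

lemma injCount_eq (H : SimpleGraph α) (G : SimpleGraph (Fin n)) :
    injCount H G = (univ.filter (IsHom H G)).card := by
  unfold injCount IsHom
  rw [Nat.card_eq_fintype_card]
  convert Fintype.card_subtype _

lemma card_subtype_ne (a : α) : Fintype.card {x : α // x ≠ a} = Fintype.card α - 1 := by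
  have := Fintype.card_subtype_compl (fun x : α => x = a)
  simpa [Fintype.card_subtype_eq] using this

lemma card_subtype_ne_ne {a b : α} (hab : a ≠ b) :
    Fintype.card {x : α // x ≠ a ∧ x ≠ b} = Fintype.card α - 2 := by
  have := Fintype.card_subtype_compl (fun x : α => x = a ∨ x = b)
  have h2 : Fintype.card {x : α // x = a ∨ x = b} = 2 := by
    rw [Fintype.card_subtype]
    have : (univ.filter fun x : α => x = a ∨ x = b) = {a, b} := by
      ext x; simp [or_comm]
    rw [this, card_pair hab]
  simp only [not_or] at this
  rw [this, h2]

/-- restriction bound with one fixed coordinate -/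
lemma card_fix_le (t : Finset (α → Fin n)) (a : α) (v : Fin n)
    (ht : ∀ f ∈ t, f a = v) : t.card ≤ n ^ (Fintype.card α - 1) := by
  have : t.card ≤ (univ : Finset ({x : α // x ≠ a} → Fin n)).card := by
    apply Finset.card_le_card_of_injOn (fun f => fun x => f x.val)
    · intro f _; exact mem_univ _
    · intro f hf g hg h
      funext x
      by_cases hx : x = a
      · rw [hx, ht f hf, ht g hg]
      · exact congrFun h ⟨x, hx⟩
  simpa [card_univ, card_subtype_ne] using this

/-- restriction bound with two coordinates landing in `S` -/
lemma card_pair_le (t : Finset (α → Fin n)) {a b : α} (hab : a ≠ b)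
    (S : Finset (Fin n × Fin n)) (ht : ∀ f ∈ t, (f a, f b) ∈ S) :
    t.card ≤ S.card * n ^ (Fintype.card α - 2) := by
  have : t.card ≤ (S ×ˢ (univ : Finset ({x : α // x ≠ a ∧ x ≠ b} → Fin n))).card := by
    apply Finset.card_le_card_of_injOn (fun f => ((f a, f b), fun x => f x.val))
    · intro f hf
      simp [ht f hf]
    · intro f hf g hg h
      simp only [Prod.mk.injEq] at h
      funext x
      by_cases hx : x = a
      · rw [hx]; exact h.1.1
      · by_cases hx' : x = b
        · rw [hx']; exact h.1.2
        · exact congrFun h.2 ⟨x, hx, hx'⟩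
  simpa [card_univ, card_subtype_ne_ne hab] using this


lemma row_card (r : ℕ) (hr : 0 < r) (c : ℕ) :
    (univ.filter fun y : Fin n => (y : ℕ) % r = c).card ≤ n / r + 1 := by
  have : (univ.filter fun y : Fin n => (y : ℕ) % r = c).card ≤
      (univ : Finset (Fin (n / r + 1))).card := by
    apply Finset.card_le_card_of_injOn
      (fun y => ⟨(y : ℕ) / r, Nat.lt_succ_of_le (Nat.div_le_div_right (le_of_lt y.2))⟩)
    · intro y _; exact mem_univ _
    · intro y hy z hz h
      simp only [coe_filter, Set.mem_setOf_eq, mem_univ, true_and] at hy hz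
      have h1 : (y : ℕ) / r = (z : ℕ) / r := by
        simpa [Fin.mk.injEq] using h
      have h2 : (y : ℕ) % r = (z : ℕ) % r := hy.trans hz.symm
      have : (y : ℕ) = (z : ℕ) := by
        conv_lhs => rw [← Nat.div_add_mod (y : ℕ) r]
        conv_rhs => rw [← Nat.div_add_mod (z : ℕ) r]
        rw [h1, h2]
      exact Fin.ext this
  simpa using this

lemma pairSet_card (r : ℕ) (hr : 0 < r) :
    ((univ : Finset (Fin n × Fin n)).filter fun p => (p.1 : ℕ) % r = (p.2 : ℕ) % r).card ≤
      n * (n / r + 1) := by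
  classical
  rw [Finset.card_eq_sum_card_fiberwise (f := Prod.fst)
    (t := (univ : Finset (Fin n))) (fun p _ => mem_univ _)]
  have hb : ∀ x : Fin n, (((univ : Finset (Fin n × Fin n)).filter
      (fun p => (p.1 : ℕ) % r = (p.2 : ℕ) % r)).filter fun p => p.1 = x).card ≤ n / r + 1 := by
    intro x
    have : (((univ : Finset (Fin n × Fin n)).filter
        (fun p => (p.1 : ℕ) % r = (p.2 : ℕ) % r)).filter fun p => p.1 = x).card ≤
        (univ.filter fun y : Fin n => (y : ℕ) % r = (x : ℕ) % r).card := by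
      apply Finset.card_le_card_of_injOn (fun p => p.2)
      · intro p hp
        simp only [mem_coe, mem_filter, mem_univ, true_and] at hp ⊢
        rw [← hp.2]
        exact hp.1.symm
      · intro p hp q hq h
        simp only [coe_filter, Set.mem_setOf_eq, mem_univ, true_and] at hp hq
        exact Prod.ext (hp.2.trans hq.2.symm) h
    exact this.trans (row_card r hr _)
  calc ∑ x : Fin n, (((univ : Finset (Fin n × Fin n)).filter
        (fun p => (p.1 : ℕ) % r = (p.2 : ℕ) % r)).filter fun p => p.1 = x).card
      ≤ ∑ _x : Fin n, (n / r + 1) := Finset.sum_le_sum (fun x _ => hb x)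
    _ = n * (n / r + 1) := by simp [mul_comm]

lemma card_inj_eq :
    (univ.filter fun f : α → Fin n => Function.Injective f).card =
      n.descFactorial (Fintype.card α) := by
  rw [← Fintype.card_subtype]
  rw [Fintype.card_congr (Equiv.subtypeInjectiveEquivEmbedding α (Fin n))]
  simp [Fintype.card_embedding_eq]


set_option maxHeartbeats 1000000 in
lemma turan_lower (H : SimpleGraph α) (r : ℕ) (hr : 0 < r) :
    ∃ Gt : SimpleGraph (Fin n), Gt.CliqueFree (r + 1) ∧
      n.descFactorial (Fintype.card α) ≤ injCount H Gt +
        Fintype.card α * Fintype.card α * (n * (n / r + 1) * n ^ (Fintype.card α - 2)) := by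
  set k := Fintype.card α with hk
  refine ⟨{ Adj := fun x y => (x : ℕ) % r ≠ (y : ℕ) % r
            symm := ⟨fun x y h => h.symm⟩
            loopless := ⟨fun x h => h rfl⟩ }, ?_, ?_⟩
  · intro s hs
    have hcard : s.card ≤ r := by
      have : s.card ≤ (univ : Finset (Fin r)).card := by
        apply Finset.card_le_card_of_injOn
          (fun x : Fin n => (⟨(x : ℕ) % r, Nat.mod_lt _ hr⟩ : Fin r))
        · intro x _; exact mem_univ _
        · intro x hx y hy h
          by_contra hxy
          have hadj := hs.1 hx hy hxy
          exact hadj (by simpa [Fin.mk.injEq] using h)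
      simpa using this
    rw [hs.2] at hcard
    omega
  · set Gt : SimpleGraph (Fin n) :=
      { Adj := fun x y => (x : ℕ) % r ≠ (y : ℕ) % r
        symm := ⟨fun x y h => h.symm⟩
        loopless := ⟨fun x h => h rfl⟩ } with hGt
    set sInj := (univ.filter fun f : α → Fin n => Function.Injective f) with hsInj
    set sGood := (univ.filter fun f : α → Fin n => Function.Injective f ∧
      ∀ a b : α, a ≠ b → (f a : ℕ) % r ≠ (f b : ℕ) % r) with hsGood
    set pairs := ((univ : Finset (α × α)).filter fun p => p.1 ≠ p.2) with hpairs
    set bad : α × α → Finset (α → Fin n) :=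
      (fun p => univ.filter fun f : α → Fin n => Function.Injective f ∧
        (f p.1 : ℕ) % r = (f p.2 : ℕ) % r) with hbad
    have hsub : sInj ⊆ sGood ∪ pairs.biUnion bad := by
      intro f hf
      simp only [hsInj, mem_filter, mem_univ, true_and] at hf
      by_cases hg : ∀ a b : α, a ≠ b → (f a : ℕ) % r ≠ (f b : ℕ) % r
      · refine mem_union_left _ ?_
        simp only [hsGood, mem_filter, mem_univ, true_and]
        exact ⟨hf, hg⟩
      · push_neg at hg
        obtain ⟨a, b, hab, he⟩ := hg
        refine mem_union_right _ (mem_biUnion.2 ⟨(a, b), ?_, ?_⟩)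
        · simp [hpairs, hab]
        · simp [hbad, hf, he]
    have hbadcard : ∀ p ∈ pairs, (bad p).card ≤ n * (n / r + 1) * n ^ (k - 2) := by
      intro p hp
      simp only [hpairs, mem_filter, mem_univ, true_and] at hp
      refine (card_pair_le (bad p) hp
          ((univ : Finset (Fin n × Fin n)).filter
            fun q => (q.1 : ℕ) % r = (q.2 : ℕ) % r) ?_).trans ?_
      · intro f hf
        simp only [hbad, mem_filter, mem_univ, true_and] at hf ⊢
        exact hf.2
      · exact Nat.mul_le_mul_right _ (pairSet_card r hr)
    have hgood : sGood.card ≤ injCount H Gt := by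
      rw [injCount_eq]
      apply Finset.card_le_card
      intro f hf
      simp only [hsGood, mem_filter, mem_univ, true_and] at hf
      simp only [mem_filter, mem_univ, true_and]
      exact ⟨hf.1, fun a b hadj => hf.2 a b hadj.ne⟩
    have hpairscard : pairs.card ≤ k * k := by
      refine (Finset.card_filter_le _ _).trans ?_
      simp [hk]
    calc n.descFactorial k = sInj.card := (card_inj_eq).symm
      _ ≤ (sGood ∪ pairs.biUnion bad).card := Finset.card_le_card hsub
      _ ≤ sGood.card + (pairs.biUnion bad).card := Finset.card_union_le _ _
      _ ≤ sGood.card + ∑ p ∈ pairs, (bad p).card := by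
          exact Nat.add_le_add_left (Finset.card_biUnion_le) _
      _ ≤ sGood.card + pairs.card * (n * (n / r + 1) * n ^ (k - 2)) := by
          refine Nat.add_le_add_left ?_ _
          calc ∑ p ∈ pairs, (bad p).card ≤ ∑ _p ∈ pairs, (n * (n / r + 1) * n ^ (k - 2)) :=
                Finset.sum_le_sum hbadcard
            _ = pairs.card * (n * (n / r + 1) * n ^ (k - 2)) := by
                rw [Finset.sum_const, smul_eq_mul]
      _ ≤ injCount H Gt + k * k * (n * (n / r + 1) * n ^ (k - 2)) := by
          exact Nat.add_le_add hgood (Nat.mul_le_mul_right _ hpairscard)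


def clone (G : SimpleGraph (Fin n)) (u v : Fin n) : SimpleGraph (Fin n) where
  Adj x y := (x ≠ v ∧ y ≠ v ∧ G.Adj x y) ∨ (x = v ∧ y ≠ v ∧ G.Adj u y) ∨
    (y = v ∧ x ≠ v ∧ G.Adj u x)
  symm := by
    refine ⟨?_⟩
    intro x y h
    rcases h with ⟨h1, h2, h3⟩ | ⟨h1, h2, h3⟩ | ⟨h1, h2, h3⟩
    · exact Or.inl ⟨h2, h1, h3.symm⟩
    · exact Or.inr (Or.inr ⟨h1, h2, h3⟩)
    · exact Or.inr (Or.inl ⟨h1, h2, h3⟩)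
  loopless := by
    refine ⟨?_⟩
    intro x h
    rcases h with ⟨h1, h2, h3⟩ | ⟨h1, h2, h3⟩ | ⟨h1, h2, h3⟩
    · exact G.loopless.irrefl x h3
    · exact h2 h1
    · exact h2 h1

lemma clone_cliqueFree {G : SimpleGraph (Fin n)} {r : ℕ} (h : G.CliqueFree (r + 1))
    {u v : Fin n} (huv : u ≠ v) : (clone G u v).CliqueFree (r + 1) := by
  intro s hs
  by_cases hv : v ∈ s
  · have hu : u ∉ s := by
      intro hu
      have hadj := hs.1 hu hv huv
      rcases hadj with ⟨_, h2, _⟩ | ⟨h1, _, _⟩ | ⟨_, _, h3⟩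
      · exact h2 rfl
      · exact huv h1
      · exact G.loopless.irrefl u h3
    apply h (insert u (s.erase v))
    constructor
    · intro x hx y hy hxy
      simp only [coe_insert, Set.mem_insert_iff, coe_erase, Set.mem_diff,
        Set.mem_singleton_iff, mem_coe] at hx hy
      rcases hx with rfl | ⟨hxs, hxv⟩
      · rcases hy with rfl | ⟨hys, hyv⟩
        · exact absurd rfl hxy
        · have hadj := hs.1 hv hys (fun he => hyv he.symm)
          rcases hadj with ⟨h1, _, _⟩ | ⟨_, _, h3⟩ | ⟨h1, _, _⟩
          · exact absurd rfl h1
          · exact h3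
          · exact absurd h1 hyv
      · rcases hy with rfl | ⟨hys, hyv⟩
        · have hadj := hs.1 hv hxs (fun he => hxv he.symm)
          rcases hadj with ⟨h1, _, _⟩ | ⟨_, _, h3⟩ | ⟨h1, _, _⟩
          · exact absurd rfl h1
          · exact h3.symm
          · exact absurd h1 hxv
        · have hadj := hs.1 hxs hys hxy
          rcases hadj with ⟨_, _, h3⟩ | ⟨h1, _, _⟩ | ⟨h1, _, _⟩
          · exact h3
          · exact absurd h1 hxv
          · exact absurd h1 hyv
    · rw [card_insert_of_notMem (fun hc => hu (mem_of_mem_erase hc)),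
        card_erase_of_mem hv, hs.2]
      omega
  · apply h s
    refine ⟨fun x hx y hy hxy => ?_, hs.2⟩
    rcases hs.1 hx hy hxy with ⟨_, _, h3⟩ | ⟨h1, _, _⟩ | ⟨h1, _, _⟩
    · exact h3
    · exact absurd (h1 ▸ hx) hv
    · exact absurd (h1 ▸ hy) hv

lemma clone_avoid (H : SimpleGraph α) (G : SimpleGraph (Fin n)) (u v : Fin n) :
    ((univ.filter (IsHom H (clone G u v))).filter fun f => ¬ v ∈ Set.range f) =
    ((univ.filter (IsHom H G)).filter fun f => ¬ v ∈ Set.range f) := by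
  ext f
  simp only [mem_filter, mem_univ, true_and]
  constructor
  · rintro ⟨⟨hinj, hhom⟩, hv⟩
    refine ⟨⟨hinj, fun a b hab => ?_⟩, hv⟩
    rcases hhom hab with ⟨_, _, h3⟩ | ⟨h1, _, _⟩ | ⟨h1, _, _⟩
    · exact h3
    · exact absurd ⟨a, h1⟩ hv
    · exact absurd ⟨b, h1⟩ hv
  · rintro ⟨⟨hinj, hhom⟩, hv⟩
    refine ⟨⟨hinj, fun a b hab => ?_⟩, hv⟩
    exact Or.inl ⟨fun hc => hv ⟨a, hc⟩, fun hc => hv ⟨b, hc⟩, hhom hab⟩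

lemma clone_count (H : SimpleGraph α) (G : SimpleGraph (Fin n)) {u v : Fin n} (huv : u ≠ v) :
    ((((univ.filter (IsHom H G)).filter fun f => ¬ v ∈ Set.range f)).filter
        fun f => u ∈ Set.range f).card ≤
    ((univ.filter (IsHom H (clone G u v))).filter fun f => v ∈ Set.range f).card := by
  apply Finset.card_le_card_of_injOn (fun f => fun x => if f x = u then v else f x)
  · intro f hf
    simp only [mem_coe, mem_filter, mem_univ, true_and] at hf ⊢
    obtain ⟨⟨⟨hinj, hhom⟩, hvr⟩, hur⟩ := hf
    refine ⟨⟨?_, ?_⟩, ?_⟩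
    · intro x y hxy
      simp only at hxy
      by_cases hx : f x = u <;> by_cases hy : f y = u
      · exact hinj (hx.trans hy.symm)
      · rw [if_pos hx, if_neg hy] at hxy
        exact absurd ⟨y, hxy.symm⟩ hvr
      · rw [if_neg hx, if_pos hy] at hxy
        exact absurd ⟨x, hxy⟩ hvr
      · rw [if_neg hx, if_neg hy] at hxy
        exact hinj hxy
    · intro a b hab
      have ha := hhom hab
      have hne : f a ≠ f b := ha.ne
      simp only
      by_cases hx : f a = u <;> by_cases hy : f b = u
      · exact absurd (hx.trans hy.symm) hne
      · rw [if_pos hx, if_neg hy]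
        exact Or.inr (Or.inl ⟨rfl, fun hc => hvr ⟨b, hc⟩, hx ▸ ha⟩)
      · rw [if_neg hx, if_pos hy]
        exact Or.inr (Or.inr ⟨rfl, fun hc => hvr ⟨a, hc⟩, hy ▸ ha.symm⟩)
      · rw [if_neg hx, if_neg hy]
        exact Or.inl ⟨fun hc => hvr ⟨a, hc⟩, fun hc => hvr ⟨b, hc⟩, ha⟩
    · obtain ⟨x, hx⟩ := hur
      exact ⟨x, by simp [hx]⟩
  · intro f hf g hg h
    simp only [coe_filter, Set.mem_setOf_eq, mem_filter, mem_univ, true_and] at hf hg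
    obtain ⟨⟨_, hvf⟩, _⟩ := hf
    obtain ⟨⟨_, hvg⟩, _⟩ := hg
    funext x
    have hx := congrFun h x
    simp only at hx
    by_cases hfx : f x = u <;> by_cases hgx : g x = u
    · rw [hfx, hgx]
    · rw [if_pos hfx, if_neg hgx] at hx
      exact absurd ⟨x, hx.symm⟩ hvg
    · rw [if_neg hfx, if_pos hgx] at hx
      exact absurd ⟨x, hx⟩ hvf
    · rw [if_neg hfx, if_neg hgx] at hx
      rw [hx]

end ExtremalDense


open ExtremalDense

set_option maxHeartbeats 2000000 in
/-- Let `H` have at least one edge, `r ≥ 300·v(H)^9`, `n ≥ r+1`, and let `G` be an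
`n`-vertex `K_{r+1}`-free graph maximizing `inj(H,·)` among all `n`-vertex `K_{r+1}`-free
graphs.  Then every vertex `v` of `G` satisfies `deg(v) ≥ (1 − 1/(100·v(H)^6))·n`,
i.e. `G` is `1/(100·v(H)^6)`-dense. -/
theorem extremal_graph_dense {α : Type*} [Fintype α] (H : SimpleGraph α)
    (hH : H.edgeSet.Nonempty) (r n : ℕ)
    (hr : 300 * (Fintype.card α) ^ 9 ≤ r) (hn : r + 1 ≤ n)
    (G : SimpleGraph (Fin n)) (hfree : G.CliqueFree (r + 1))
    (hmax : ∀ G' : SimpleGraph (Fin n), G'.CliqueFree (r + 1) →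
      injCount H G' ≤ injCount H G) :
    ∀ v : Fin n, (1 - 1 / (100 * (Fintype.card α : ℝ) ^ 6)) * (n : ℝ) ≤
      ((G.neighborSet v).ncard : ℝ) := by
  classical
  intro v
  by_contra hcon
  push_neg at hcon
  set k := Fintype.card α with hk
  obtain ⟨a₀, b₀, hadj⟩ : ∃ a b : α, H.Adj a b := by
    obtain ⟨e, he⟩ := hH
    induction e with
    | _ a b => exact ⟨a, b, H.mem_edgeSet.1 he⟩
  have hab : a₀ ≠ b₀ := hadj.ne
  have hk2 : 2 ≤ k := by
    have : Nontrivial α := ⟨⟨a₀, b₀, hab⟩⟩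
    exact Fintype.one_lt_card
  have hk9 : k ≤ k ^ 9 := Nat.le_self_pow (by norm_num) k
  have hkr : k ≤ r := le_trans (hk9.trans (Nat.le_mul_of_pos_left _ (by norm_num))) hr
  have hrpos : 0 < r := lt_of_lt_of_le (by positivity) hkr
  have hkn : k ≤ n := hkr.trans (by omega)
  have hn1 : 1 ≤ n := by omega
  -- degree finset
  set Dv : Finset (Fin n) := univ.filter (fun y => G.Adj v y) with hDv
  set d := Dv.card with hd
  have hdeg : (G.neighborSet v).ncard = d := by
    rw [Set.ncard_eq_toFinset_card']
    congr 1
    ext y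
    simp [hDv, SimpleGraph.neighborSet]
    exact Set.mem_toFinset
  rw [hdeg] at hcon
  -- counting sets
  set sG := univ.filter (IsHom H G) with hsG
  set N := sG.card with hN
  set sV := sG.filter (fun f => v ∈ Set.range f) with hsV
  set Nv := sV.card with hNv
  set sA := sG.filter (fun f => ¬ v ∈ Set.range f) with hsA
  set A := sA.card with hA
  have hsplit : Nv + A = N :=
    Finset.card_filter_add_card_filter_not (p := fun f => v ∈ Set.range f)
  -- (I) upper bound on Nv
  have hbound_gen : ∀ a : α, (sG.filter (fun f => f a = v)).card ≤ n ^ (k - 1) :=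
    fun a => card_fix_le _ a v (fun f hf => (mem_filter.1 hf).2)
  have hmemhom : ∀ a : α, ∀ f ∈ sG.filter (fun f => f a = v),
      IsHom H G f ∧ f a = v := by
    intro a f hf
    rw [mem_filter, hsG, mem_filter] at hf
    exact ⟨hf.1.2, hf.2⟩
  have hbound_a0 : (sG.filter (fun f => f a₀ = v)).card ≤ d * n ^ (k - 2) := by
    have h := card_pair_le (sG.filter (fun f => f a₀ = v)) hab ({v} ×ˢ Dv) ?_
    · simpa using h
    · intro f hf
      obtain ⟨⟨hinj, hhom⟩, hfa⟩ := hmemhom a₀ f hf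
      rw [mem_product]
      refine ⟨by simp [hfa], ?_⟩
      rw [hDv, mem_filter]
      exact ⟨mem_univ _, hfa ▸ hhom hadj⟩
  have hbound_b0 : (sG.filter (fun f => f b₀ = v)).card ≤ d * n ^ (k - 2) := by
    have h := card_pair_le (sG.filter (fun f => f b₀ = v)) hab.symm ({v} ×ˢ Dv) ?_
    · simpa using h
    · intro f hf
      obtain ⟨⟨hinj, hhom⟩, hfb⟩ := hmemhom b₀ f hf
      rw [mem_product]
      refine ⟨by simp [hfb], ?_⟩
      rw [hDv, mem_filter]
      exact ⟨mem_univ _, hfb ▸ (hhom hadj).symm⟩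
  have hNv_le : Nv ≤ d * n ^ (k - 2) + d * n ^ (k - 2) + (k - 2) * n ^ (k - 1) := by
    have hsub : sV ⊆ univ.biUnion (fun a : α => sG.filter (fun f => f a = v)) := by
      intro f hf
      rw [hsV, mem_filter] at hf
      obtain ⟨x, hx⟩ := hf.2
      exact mem_biUnion.2 ⟨x, mem_univ _, mem_filter.2 ⟨hf.1, hx⟩⟩
    have h1 : Nv ≤ ∑ a ∈ univ, (sG.filter (fun f => f a = v)).card :=
      (Finset.card_le_card hsub).trans Finset.card_biUnion_le
    have hsd : ({a₀, b₀} : Finset α) ⊆ univ := subset_univ _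
    have h2 := Finset.sum_sdiff (f := fun a => (sG.filter (fun f => f a = v)).card) hsd
    have h3 : ∑ a ∈ ({a₀, b₀} : Finset α), (sG.filter (fun f => f a = v)).card
        = (sG.filter (fun f => f a₀ = v)).card + (sG.filter (fun f => f b₀ = v)).card :=
      Finset.sum_pair hab
    have h4 : ∑ a ∈ univ \ ({a₀, b₀} : Finset α), (sG.filter (fun f => f a = v)).card
        ≤ (k - 2) * n ^ (k - 1) := by
      have := Finset.sum_le_card_nsmul (univ \ ({a₀, b₀} : Finset α))
        (fun a => (sG.filter (fun f => f a = v)).card) (n ^ (k - 1))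
        (fun a _ => hbound_gen a)
      have hcard : (univ \ ({a₀, b₀} : Finset α)).card = k - 2 := by
        rw [Finset.card_sdiff_of_subset hsd, card_univ, Finset.card_pair hab]
      rw [hcard, smul_eq_mul] at this
      exact this
    linarith [h1, h2.ge, h2.le, h3, h4, hbound_a0, hbound_b0]
  -- (II) double counting over u
  have hTsum : ∑ u ∈ univ.erase v, (sA.filter (fun f => u ∈ Set.range f)).card = A * k := by
    calc ∑ u ∈ univ.erase v, (sA.filter (fun f => u ∈ Set.range f)).card
        = ∑ u ∈ univ.erase v, ∑ f ∈ sA, (if u ∈ Set.range f then 1 else 0) := by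
          refine Finset.sum_congr rfl fun u _ => ?_
          exact Finset.card_filter _ _
      _ = ∑ f ∈ sA, ∑ u ∈ univ.erase v, (if u ∈ Set.range f then 1 else 0) :=
          Finset.sum_comm
      _ = ∑ f ∈ sA, ((univ.erase v).filter (fun u => u ∈ Set.range f)).card := by
          refine Finset.sum_congr rfl fun f _ => ?_
          rw [Finset.card_filter]
      _ = ∑ f ∈ sA, k := by
          refine Finset.sum_congr rfl fun f hf => ?_
          rw [hsA, mem_filter, hsG, mem_filter] at hf
          obtain ⟨⟨_, hinj, _⟩, hvr⟩ := hf
          have himg : (univ.erase v).filter (fun u => u ∈ Set.range f) = univ.image f := by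
            ext w
            simp only [mem_filter, mem_erase, mem_univ, true_and, and_true, mem_image,
              Set.mem_range]
            constructor
            · rintro ⟨_, x, hx⟩; exact ⟨x, hx⟩
            · rintro ⟨x, hx⟩
              refine ⟨?_, x, hx⟩
              rintro rfl
              exact hvr ⟨x, hx⟩
          rw [himg, Finset.card_image_of_injective _ hinj, card_univ]
      _ = A * k := by rw [Finset.sum_const, smul_eq_mul]
  have hne_erase : (univ.erase v).Nonempty := by
    rw [← Finset.card_pos, Finset.card_erase_of_mem (mem_univ v), card_univ, Fintype.card_fin]
    have h2 : 2 ≤ n := le_trans (Nat.succ_le_succ hrpos) hn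
    exact Nat.sub_pos_of_lt (lt_of_lt_of_le one_lt_two h2)
  have hEx : ∃ u ∈ univ.erase v,
      A * k ≤ (n - 1) * (sA.filter (fun f => u ∈ Set.range f)).card := by
    apply Finset.exists_le_of_sum_le hne_erase
    rw [Finset.sum_const, Finset.card_erase_of_mem (mem_univ v), card_univ, Fintype.card_fin,
      ← Finset.mul_sum, hTsum, smul_eq_mul]
  obtain ⟨u, hu, hukey⟩ := hEx
  have huv : u ≠ v := (Finset.mem_erase.1 hu).1
  -- (III) clone comparison
  have hBc : (sA.filter (fun f => u ∈ Set.range f)).card ≤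
      ((univ.filter (IsHom H (clone G u v))).filter
      fun f => v ∈ Set.range f).card := by
    have h := clone_count H G huv
    rw [← hsG, ← hsA] at h
    exact h
  have hclone_le : (univ.filter (IsHom H (clone G u v))).card ≤ N := by
    have h := hmax (clone G u v) (clone_cliqueFree hfree huv)
    rw [injCount_eq H (clone G u v), injCount_eq H G, ← hsG, ← hN] at h
    exact h
  have hsplitC := Finset.card_filter_add_card_filter_not
    (s := univ.filter (IsHom H (clone G u v))) (p := fun f => v ∈ Set.range f)
  have hAc : ((univ.filter (IsHom H (clone G u v))).filter
      fun f => ¬ v ∈ Set.range f).card = A := by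
    rw [clone_avoid, ← hsG, ← hsA]
  have hBcNv : ((univ.filter (IsHom H (clone G u v))).filter
      fun f => v ∈ Set.range f).card ≤ Nv := by
    linarith [hsplitC, hAc, hclone_le, hsplit]
  have hkeyN : N * k ≤ (k + (n - 1)) * Nv := by
    have h1 : A * k ≤ (n - 1) * Nv :=
      hukey.trans (Nat.mul_le_mul_left _ (hBc.trans hBcNv))
    calc N * k = Nv * k + A * k := by rw [← hsplit]; ring
      _ ≤ Nv * k + (n - 1) * Nv := Nat.add_le_add_left h1 _
      _ = (k + (n - 1)) * Nv := by ring
  -- (IV) Turán lower bound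
  obtain ⟨Gt, hGtfree, hGtlow⟩ := turan_lower (n := n) H r hrpos
  have hlow : n.descFactorial k ≤ N + k * k * (n * (n / r + 1) * n ^ (k - 2)) := by
    refine hGtlow.trans (Nat.add_le_add_right ?_ _)
    have h := hmax Gt hGtfree
    rw [injCount_eq H G, ← hsG, ← hN] at h
    exact h
  have hdesc : (n + 1 - k) ^ k ≤ n.descFactorial k := Nat.pow_sub_le_descFactorial n k
  -- (V) real arithmetic
  have hx0 : (0 : ℝ) < (n : ℝ) := by positivity
  have hK2' : (2 : ℝ) ≤ (k : ℝ) := by exact_mod_cast hk2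
  have hKX : (k : ℝ) ≤ (n : ℝ) := by exact_mod_cast hkn
  have hR' : 300 * (k : ℝ) ^ 9 ≤ (r : ℝ) := by exact_mod_cast hr
  have hXR : (r : ℝ) + 1 ≤ (n : ℝ) := by exact_mod_cast hn
  have hmr : ((n / r : ℕ) : ℝ) * (r : ℝ) ≤ (n : ℝ) := by exact_mod_cast Nat.div_mul_le_self n r
  have hm0 : (0 : ℝ) ≤ ((n / r : ℕ) : ℝ) := by positivity
  have hd0 : (0 : ℝ) ≤ (d : ℝ) := by positivity
  have c1 : ((n : ℝ) + 1 - (k : ℝ)) ^ k ≤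
      (N : ℝ) + (k : ℝ) * (k : ℝ) * ((n : ℝ) * (((n / r : ℕ) : ℝ) + 1) * (n : ℝ) ^ (k - 2)) := by
    have h := hdesc.trans hlow
    have hcast : ((n + 1 - k : ℕ) : ℝ) = (n : ℝ) + 1 - (k : ℝ) := by
      rw [Nat.cast_sub (le_trans hkn (Nat.le_succ n))]
      push_cast
      ring
    calc ((n : ℝ) + 1 - (k : ℝ)) ^ k = ((n + 1 - k : ℕ) : ℝ) ^ k := by rw [hcast]
      _ ≤ _ := by exact_mod_cast h
  have c2 : (N : ℝ) * (k : ℝ) ≤ ((k : ℝ) + ((n : ℝ) - 1)) * (Nv : ℝ) := by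
    have hcast : ((k + (n - 1) : ℕ) : ℝ) = (k : ℝ) + ((n : ℝ) - 1) := by
      rw [Nat.cast_add, Nat.cast_sub hn1]
      push_cast
      ring
    calc (N : ℝ) * (k : ℝ) = ((N * k : ℕ) : ℝ) := by push_cast; ring
      _ ≤ (((k + (n - 1)) * Nv : ℕ) : ℝ) := by exact_mod_cast hkeyN
      _ = ((k : ℝ) + ((n : ℝ) - 1)) * (Nv : ℝ) := by rw [Nat.cast_mul, hcast]
  have c3 : (Nv : ℝ) ≤ (d : ℝ) * (n : ℝ) ^ (k - 2) + (d : ℝ) * (n : ℝ) ^ (k - 2) +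
      ((k : ℝ) - 2) * (n : ℝ) ^ (k - 1) := by
    calc (Nv : ℝ) ≤ ((d * n ^ (k - 2) + d * n ^ (k - 2) + (k - 2) * n ^ (k - 1) : ℕ) : ℝ) :=
          Nat.cast_le.2 hNv_le
      _ = _ := by
          push_cast [Nat.cast_sub hk2]
          ring
  -- Bernoulli
  have hb : (n : ℝ) ^ k + (k : ℝ) * (1 - (k : ℝ)) * (n : ℝ) ^ (k - 1) ≤
      ((n : ℝ) + 1 - (k : ℝ)) ^ k := by
    have ha : (-2 : ℝ) ≤ (1 - (k : ℝ)) / (n : ℝ) := by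
      rw [le_div_iff₀ hx0]
      nlinarith [hKX, hx0]
    have hber := one_add_mul_le_pow ha k
    have hXk : (0 : ℝ) ≤ (n : ℝ) ^ k := by positivity
    have hmul := mul_le_mul_of_nonneg_right hber hXk
    have he1 : (1 + (1 - (k : ℝ)) / (n : ℝ)) = ((n : ℝ) + 1 - (k : ℝ)) / (n : ℝ) := by
      field_simp
      ring
    rw [he1] at hmul
    have he2 : (((n : ℝ) + 1 - (k : ℝ)) / (n : ℝ)) ^ k * (n : ℝ) ^ k
        = ((n : ℝ) + 1 - (k : ℝ)) ^ k := by
      rw [div_pow]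
      field_simp
    rw [he2] at hmul
    have hxk : (n : ℝ) ^ k = (n : ℝ) ^ (k - 1) * (n : ℝ) := by
      rw [← pow_succ]
      congr 1
      exact (Nat.succ_pred_eq_of_pos (Nat.lt_of_lt_of_le Nat.zero_lt_two hk2)).symm
    have heq : (1 + (k : ℝ) * ((1 - (k : ℝ)) / (n : ℝ))) * (n : ℝ) ^ k
        = (n : ℝ) ^ k + (k : ℝ) * (1 - (k : ℝ)) * (n : ℝ) ^ (k - 1) := by
      rw [hxk]
      field_simp
    linarith [hmul, heq.symm.le, heq.le]
  have hp1 : (n : ℝ) ^ (k - 1) = (n : ℝ) ^ (k - 2) * (n : ℝ) := by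
    rw [← pow_succ]
    congr 1
    have h1 : 0 < k - 1 := Nat.sub_pos_of_lt (lt_of_lt_of_le Nat.one_lt_two hk2)
    calc k - 1 = (k - 1 - 1) + 1 := (Nat.succ_pred_eq_of_pos h1).symm
      _ = (k - 2) + 1 := by rw [Nat.sub_sub]
  have hp2 : (n : ℝ) ^ k = (n : ℝ) ^ (k - 2) * (n : ℝ) ^ 2 := by
    rw [← pow_add]
    congr 1
    have : k = (k - 2) + 2 := (Nat.sub_add_cancel hk2).symm
    exact this
  have hy0 : (0 : ℝ) < (n : ℝ) ^ (k - 2) := by positivity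
  have hK0 : (0 : ℝ) < (k : ℝ) := by linarith
  -- combine into inequality divided by n^(k-2)
  set X := (n : ℝ) with hX
  set K := (k : ℝ) with hKdef
  set D := (d : ℝ) with hDdef
  set m := ((n / r : ℕ) : ℝ) with hm
  set y := X ^ (k - 2) with hy
  have E1 : y * X ^ 2 + K * (1 - K) * (y * X) ≤ (N : ℝ) + K * K * (X * (m + 1) * y) := by
    have h := hb.trans c1
    rw [hp2, hp1] at h
    linarith [h]
  have E2 : (N : ℝ) * K ≤ (K + (X - 1)) * (2 * (D * y) + (K - 2) * (y * X)) := by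
    have hnn : (0 : ℝ) ≤ K + (X - 1) := by linarith
    have h3 : (Nv : ℝ) ≤ 2 * (D * y) + (K - 2) * (y * X) := by
      have := c3
      rw [hp1] at this
      linarith [this]
    calc (N : ℝ) * K ≤ (K + (X - 1)) * (Nv : ℝ) := c2
      _ ≤ _ := mul_le_mul_of_nonneg_left h3 hnn
  have key0 : K * (y * X ^ 2 + K * (1 - K) * (y * X)) ≤
      (K + (X - 1)) * (2 * (D * y) + (K - 2) * (y * X)) + K * (K * K * (X * (m + 1) * y)) := by
    have h := mul_le_mul_of_nonneg_left E1 (le_of_lt hK0)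
    calc K * (y * X ^ 2 + K * (1 - K) * (y * X))
        ≤ K * ((N : ℝ) + K * K * (X * (m + 1) * y)) := h
      _ = (N : ℝ) * K + K * (K * K * (X * (m + 1) * y)) := by ring
      _ ≤ _ := by linarith [E2]
  have hPQ : K * X ^ 2 + K * K * (1 - K) * X ≤
      (K + (X - 1)) * (2 * D + (K - 2) * X) + K * K * K * (X * (m + 1)) := by
    have hL : K * (y * X ^ 2 + K * (1 - K) * (y * X)) =
        y * (K * X ^ 2 + K * K * (1 - K) * X) := by ring
    have hR : (K + (X - 1)) * (2 * (D * y) + (K - 2) * (y * X)) +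
        K * (K * K * (X * (m + 1) * y)) =
        y * ((K + (X - 1)) * (2 * D + (K - 2) * X) + K * K * K * (X * (m + 1))) := by ring
    rw [hL, hR] at key0
    exact le_of_mul_le_mul_left (by linarith [key0]) hy0
  -- final contradiction
  have h6 : (0 : ℝ) < 100 * K ^ 6 := by positivity
  have hDX : D ≤ X := by
    have hinv : (0 : ℝ) ≤ 1 / (100 * K ^ 6) := by positivity
    nlinarith [hcon, hx0, hinv]
  have hcon' : 100 * K ^ 6 * D < (100 * K ^ 6 - 1) * X := by
    have h := mul_lt_mul_of_pos_left hcon h6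
    have heq : 100 * K ^ 6 * ((1 - 1 / (100 * K ^ 6)) * X) = (100 * K ^ 6 - 1) * X := by
      field_simp
      try ring
    linarith [h, heq.le, heq.ge]
  have step1 : 2 * X ^ 2 ≤ 2 * D * X + K ^ 3 * X * (m + 2) := by
    nlinarith [hPQ, hDX, hK2', hx0, hd0, hm0, mul_nonneg (sub_nonneg.2 hDX) (le_of_lt hK0),
      mul_nonneg (by linarith : (0:ℝ) ≤ K - 2) (le_of_lt hx0)]
  have step2 : 2 * X ≤ 2 * D + K ^ 3 * (m + 2) := by
    have h' : (2 * X) * X ≤ (2 * D + K ^ 3 * (m + 2)) * X := by nlinarith [step1]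
    exact le_of_mul_le_mul_right h' hx0
  have step3 : 200 * K ^ 6 * X ≤ 200 * K ^ 6 * D + 100 * (K ^ 9 * m) + 200 * K ^ 9 := by
    have h := mul_le_mul_of_nonneg_left step2 (le_of_lt h6)
    nlinarith [h]
  have f1 : 300 * (K ^ 9 * m) ≤ X := by
    have h : 300 * K ^ 9 * m ≤ (r : ℝ) * m := mul_le_mul_of_nonneg_right hR' hm0
    have h2 : (r : ℝ) * m ≤ X := by rw [mul_comm]; exact hmr
    linarith
  have f2 : 300 * K ^ 9 ≤ X := by linarith
  -- 200 K^6 X ≤ 200 K^6 D + X/3 + (2/3) X < 200 K^6 X - 2X + X : contradiction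
  linarith [step3, hcon', f1, f2, hx0]
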